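/- For every x_j ∈ [0,1]: U_i(x_j/3, x_j) ≥ U_i((2 + x_j)/3, x_j) if and only if x_j ≥ 1/2, with equality of the two payoffs exactly when x_j = 1/2. -/

import Mathlib

open MeasureTheory Set

/-- The wage the benefactor at `b` pays: the upper envelope of the two
politicians' policy-production costs. -/
noncomputable def w (c : ℝ → ℝ) (x₁ x₂ b : ℝ) : ℝ :=
  max (c |x₁ - b|) (c |x₂ - b|)

/-- Politician `i`'s expected utility when she locates at `xi` and the
opponent at `xj`, benefactors being uniform on `[0,1]`. -/
noncomputable def U (c : ℝ → ℝ) (xi xj : ℝ) : ℝ :=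
  ∫ b in (0:ℝ)..1, (w c xi xj b - c |xi - b|)

private lemma intInt (c : ℝ → ℝ) (hc : ContinuousOn c (Icc 0 1)) {a b : ℝ}
    (ha : a ∈ Icc (0:ℝ) 1) (hb : b ∈ Icc (0:ℝ) 1) :
    IntervalIntegrable c MeasureTheory.volume a b := by
  apply (hc.mono ?_).intervalIntegrable
  rw [show Icc (0:ℝ) 1 = uIcc (0:ℝ) 1 from (uIcc_of_le (by norm_num)).symm]
  exact uIcc_subset_uIcc (by rwa [uIcc_of_le (by norm_num : (0:ℝ) ≤ 1)])
    (by rwa [uIcc_of_le (by norm_num : (0:ℝ) ≤ 1)])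

private lemma symmU (c : ℝ → ℝ) (x : ℝ) :
    U c ((2 + x) / 3) x = U c ((1 - x) / 3) (1 - x) := by
  unfold U w
  calc (∫ b in (0:ℝ)..1, (max (c |(2 + x) / 3 - b|) (c |x - b|) - c |(2 + x) / 3 - b|))
      = ∫ b in (0:ℝ)..1,
        (fun b => max (c |(1 - x) / 3 - b|) (c |1 - x - b|) - c |(1 - x) / 3 - b|)
          (1 - b) := by
        apply intervalIntegral.integral_congr
        intro b _
        have e1 : |(2 + x) / 3 - b| = |(1 - x) / 3 - (1 - b)| := by
          rw [abs_sub_comm ((1-x)/3)]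
          congr 1; ring
        have e2 : |x - b| = |1 - x - (1 - b)| := by
          rw [abs_sub_comm (1-x)]
          congr 1; ring
        simp only [e1, e2]
    _ = ∫ b in (1-(1:ℝ))..(1-(0:ℝ)),
        (max (c |(1 - x) / 3 - b|) (c |1 - x - b|) - c |(1 - x) / 3 - b|) :=
        intervalIntegral.integral_comp_sub_left
          (fun b => max (c |(1 - x) / 3 - b|) (c |1 - x - b|) - c |(1 - x) / 3 - b|) 1
    _ = ∫ b in (0:ℝ)..1,
        (max (c |(1 - x) / 3 - b|) (c |1 - x - b|) - c |(1 - x) / 3 - b|) := by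
        norm_num

private lemma keyU (c : ℝ → ℝ) (hc : ContinuousOn c (Icc 0 1))
    (hmono : StrictMonoOn c (Icc 0 1)) {x : ℝ} (hx : x ∈ Icc (0:ℝ) 1) :
    U c (x / 3) x = ∫ u in (0:ℝ)..x, (c u - c (u / 3)) := by
  obtain ⟨hx0, hx1⟩ := hx
  have hmono' := hmono.monotoneOn
  have hm0 : (0:ℝ) ∈ Icc (0:ℝ) 1 := by constructor <;> norm_num
  have hm1 : (1:ℝ) ∈ Icc (0:ℝ) 1 := by constructor <;> norm_num
  have hmx : x ∈ Icc (0:ℝ) 1 := ⟨hx0, hx1⟩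
  have hmx3 : x / 3 ∈ Icc (0:ℝ) 1 := ⟨by linarith, by linarith⟩
  have hm2x3 : 2 * x / 3 ∈ Icc (0:ℝ) 1 := ⟨by linarith, by linarith⟩
  -- abs memberships
  have habs : ∀ y ∈ Icc (0:ℝ) 1, ∀ b ∈ Icc (0:ℝ) 1, |y - b| ∈ Icc (0:ℝ) 1 := by
    rintro y ⟨hy0, hy1⟩ b ⟨hb0, hb1⟩
    exact ⟨abs_nonneg _, abs_le.2 ⟨by linarith, by linarith⟩⟩
  -- continuity of composite pieces
  have hcomp : ∀ y ∈ Icc (0:ℝ) 1, ContinuousOn (fun b => c |y - b|) (Icc 0 1) := by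
    intro y hy
    exact hc.comp ((continuous_const.sub continuous_id).abs.continuousOn)
      (fun b hb => habs y hy b hb)
  have hc1 := hcomp (x / 3) hmx3
  have hc2 := hcomp x hmx
  have hgcont : ContinuousOn
      (fun b => w c (x / 3) x b - c |x / 3 - b|) (Icc 0 1) := by
    unfold w
    exact (hc1.sup hc2).sub hc1
  have hsub : ∀ a b : ℝ, a ∈ Icc (0:ℝ) 1 → b ∈ Icc (0:ℝ) 1 →
      uIcc a b ⊆ Icc (0:ℝ) 1 := by
    intro a b ha hb
    rw [show Icc (0:ℝ) 1 = uIcc (0:ℝ) 1 from (uIcc_of_le (by norm_num)).symm]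
    exact uIcc_subset_uIcc (by rwa [uIcc_of_le (by norm_num : (0:ℝ) ≤ 1)])
      (by rwa [uIcc_of_le (by norm_num : (0:ℝ) ≤ 1)])
  have hgint : ∀ a b : ℝ, a ∈ Icc (0:ℝ) 1 → b ∈ Icc (0:ℝ) 1 →
      IntervalIntegrable (fun b => w c (x / 3) x b - c |x / 3 - b|)
        MeasureTheory.volume a b := by
    intro a b ha hb
    exact (hgcont.mono (hsub a b ha hb)).intervalIntegrable
  -- split the integral at 2x/3
  have hsplit : U c (x / 3) x =
      (∫ b in (0:ℝ)..(2 * x / 3), (w c (x / 3) x b - c |x / 3 - b|)) +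
      ∫ b in (2 * x / 3)..(1:ℝ), (w c (x / 3) x b - c |x / 3 - b|) := by
    rw [U, intervalIntegral.integral_add_adjacent_intervals
      (hgint 0 (2 * x / 3) hm0 hm2x3) (hgint (2 * x / 3) 1 hm2x3 hm1)]
  -- right part vanishes
  have hright : (∫ b in (2 * x / 3)..(1:ℝ),
      (w c (x / 3) x b - c |x / 3 - b|)) = 0 := by
    rw [intervalIntegral.integral_congr (g := fun _ => (0:ℝ)),
      intervalIntegral.integral_zero]
    intro b hb
    rw [uIcc_of_le (by linarith : 2 * x / 3 ≤ 1)] at hb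
    obtain ⟨hb1, hb2⟩ := hb
    have hble : |x - b| ≤ |x / 3 - b| := by
      rw [abs_sub_comm (x/3)]
      exact abs_le_abs (by linarith) (by linarith)
    have hbm : b ∈ Icc (0:ℝ) 1 := ⟨by linarith, hb2⟩
    have : c |x - b| ≤ c |x / 3 - b| :=
      hmono' (habs x hmx b hbm) (habs (x/3) hmx3 b hbm) hble
    simp only [w, max_eq_left this, sub_self]
  -- left part
  have hleft : (∫ b in (0:ℝ)..(2 * x / 3),
      (w c (x / 3) x b - c |x / 3 - b|)) =
      (∫ u in (x/3)..x, c u) - 2 * ∫ u in (0:ℝ)..(x/3), c u := by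
    have hcong : ∀ b ∈ uIcc (0:ℝ) (2 * x / 3),
        w c (x / 3) x b - c |x / 3 - b| = c (x - b) - c |x / 3 - b| := by
      intro b hb
      rw [uIcc_of_le (by linarith : (0:ℝ) ≤ 2 * x / 3)] at hb
      obtain ⟨hb1, hb2⟩ := hb
      have hbm : b ∈ Icc (0:ℝ) 1 := ⟨hb1, by linarith⟩
      have hble : |x / 3 - b| ≤ |x - b| := by
        have hxb : |x - b| = x - b := abs_of_nonneg (by linarith)
        rw [hxb]
        exact abs_le (G := ℝ) |>.2 ⟨by linarith, by linarith⟩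
      have hmax : c |x / 3 - b| ≤ c |x - b| :=
        hmono' (habs (x/3) hmx3 b hbm) (habs x hmx b hbm) hble
      have hxb : |x - b| = x - b := abs_of_nonneg (by linarith)
      simp only [w]
      rw [max_eq_right hmax, hxb]
    rw [intervalIntegral.integral_congr hcong]
    have hi1 : IntervalIntegrable (fun b => c (x - b)) MeasureTheory.volume
        0 (2 * x / 3) := by
      apply ContinuousOn.intervalIntegrable
      apply hc.comp (continuous_const.sub continuous_id).continuousOn
      intro b hb
      rw [uIcc_of_le (by linarith : (0:ℝ) ≤ 2 * x / 3)] at hb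
      obtain ⟨h1, h2⟩ := hb
      show x - b ∈ Icc (0:ℝ) 1
      exact ⟨by linarith, by linarith⟩
    have hi2 : IntervalIntegrable (fun b => c |x / 3 - b|) MeasureTheory.volume
        0 (2 * x / 3) :=
      (hc1.mono (hsub 0 (2 * x / 3) hm0 hm2x3)).intervalIntegrable
    rw [intervalIntegral.integral_sub hi1 hi2]
    have e1 : (∫ b in (0:ℝ)..(2 * x / 3), c (x - b)) = ∫ u in (x/3)..x, c u := by
      rw [intervalIntegral.integral_comp_sub_left c x]
      norm_num
      ring_nf
    have e2 : (∫ b in (0:ℝ)..(2 * x / 3), c |x / 3 - b|) =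
        2 * ∫ u in (0:ℝ)..(x/3), c u := by
      have hs : (∫ b in (0:ℝ)..(2 * x / 3), c |x / 3 - b|) =
          (∫ b in (0:ℝ)..(x / 3), c |x / 3 - b|) +
          ∫ b in (x / 3)..(2 * x / 3), c |x / 3 - b| := by
        rw [intervalIntegral.integral_add_adjacent_intervals
          ((hc1.mono (hsub 0 (x/3) hm0 hmx3)).intervalIntegrable)
          ((hc1.mono (hsub (x/3) (2*x/3) hmx3 hm2x3)).intervalIntegrable)]
      rw [hs]
      have p1 : (∫ b in (0:ℝ)..(x / 3), c |x / 3 - b|) =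
          ∫ u in (0:ℝ)..(x/3), c u := by
        rw [intervalIntegral.integral_congr (g := fun b => c (x / 3 - b))]
        · rw [intervalIntegral.integral_comp_sub_left c (x/3)]
          norm_num
        · intro b hb
          rw [uIcc_of_le (by linarith : (0:ℝ) ≤ x / 3)] at hb
          obtain ⟨h1, h2⟩ := hb
          simp only []
          rw [abs_of_nonneg (by linarith)]
      have p2 : (∫ b in (x / 3)..(2 * x / 3), c |x / 3 - b|) =
          ∫ u in (0:ℝ)..(x/3), c u := by
        rw [intervalIntegral.integral_congr (g := fun b => c (b - x / 3))]
        · rw [intervalIntegral.integral_comp_sub_right c (x/3)]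
          norm_num
          ring_nf
        · intro b hb
          rw [uIcc_of_le (by linarith : x / 3 ≤ 2 * x / 3)] at hb
          obtain ⟨h1, h2⟩ := hb
          simp only []
          rw [abs_sub_comm, abs_of_nonneg (by linarith)]
      rw [p1, p2]; ring
    rw [e1, e2]
  -- the right-hand side
  have hrhs : (∫ u in (0:ℝ)..x, (c u - c (u / 3))) =
      (∫ u in (x/3)..x, c u) - 2 * ∫ u in (0:ℝ)..(x/3), c u := by
    have hi3 : IntervalIntegrable (fun u => c (u / 3)) MeasureTheory.volume 0 x := by
      apply ContinuousOn.intervalIntegrable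
      apply hc.comp (continuous_id.div_const 3).continuousOn
      intro u hu
      obtain ⟨h1, h2⟩ := hsub 0 x hm0 hmx hu
      show u / 3 ∈ Icc (0:ℝ) 1
      exact ⟨by linarith, by linarith⟩
    rw [intervalIntegral.integral_sub (intInt c hc hm0 hmx) hi3]
    have e3 : (∫ u in (0:ℝ)..x, c (u / 3)) = 3 * ∫ u in (0:ℝ)..(x/3), c u := by
      rw [intervalIntegral.integral_comp_div c (by norm_num : (3:ℝ) ≠ 0)]
      norm_num
    have e4 : (∫ u in (0:ℝ)..x, c u) =
        (∫ u in (0:ℝ)..(x/3), c u) + ∫ u in (x/3)..x, c u := by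
      rw [intervalIntegral.integral_add_adjacent_intervals
        (intInt c hc hm0 hmx3) (intInt c hc hmx3 hmx)]
    rw [e3, e4]; ring
  rw [hsplit, hright, hleft, hrhs]; ring

private lemma Fmono (c : ℝ → ℝ) (hc : ContinuousOn c (Icc 0 1))
    (hmono : StrictMonoOn c (Icc 0 1)) :
    StrictMonoOn (fun t => ∫ u in (0:ℝ)..t, (c u - c (u / 3))) (Icc 0 1) := by
  intro s hs t ht hst
  obtain ⟨hs0, hs1⟩ := hs
  obtain ⟨ht0, ht1⟩ := ht
  have hii : ∀ a b : ℝ, a ∈ Icc (0:ℝ) 1 → b ∈ Icc (0:ℝ) 1 →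
      IntervalIntegrable (fun u => c u - c (u / 3)) MeasureTheory.volume a b := by
    intro a b ha hb
    apply ContinuousOn.intervalIntegrable
    apply ContinuousOn.sub
    · apply hc.mono
      rw [show Icc (0:ℝ) 1 = uIcc (0:ℝ) 1 from (uIcc_of_le (by norm_num)).symm]
      exact uIcc_subset_uIcc (by rwa [uIcc_of_le (by norm_num : (0:ℝ) ≤ 1)])
        (by rwa [uIcc_of_le (by norm_num : (0:ℝ) ≤ 1)])
    · apply hc.comp (continuous_id.div_const 3).continuousOn
      intro u hu
      have hsubab : uIcc a b ⊆ Icc (0:ℝ) 1 := by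
        rw [show Icc (0:ℝ) 1 = uIcc (0:ℝ) 1 from (uIcc_of_le (by norm_num)).symm]
        exact uIcc_subset_uIcc (by rwa [uIcc_of_le (by norm_num : (0:ℝ) ≤ 1)])
          (by rwa [uIcc_of_le (by norm_num : (0:ℝ) ≤ 1)])
      obtain ⟨h1, h2⟩ := hsubab hu
      show u / 3 ∈ Icc (0:ℝ) 1
      exact ⟨by linarith, by linarith⟩
  have hadd : (∫ u in (0:ℝ)..t, (c u - c (u / 3))) =
      (∫ u in (0:ℝ)..s, (c u - c (u / 3))) +
      ∫ u in s..t, (c u - c (u / 3)) := by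
    rw [intervalIntegral.integral_add_adjacent_intervals
      (hii 0 s ⟨le_refl 0, by norm_num⟩ ⟨hs0, hs1⟩)
      (hii s t ⟨hs0, hs1⟩ ⟨ht0, ht1⟩)]
  have hpos : 0 < ∫ u in s..t, (c u - c (u / 3)) := by
    apply intervalIntegral.intervalIntegral_pos_of_pos_on
      (hii s t ⟨hs0, hs1⟩ ⟨ht0, ht1⟩) _ hst
    intro u hu
    obtain ⟨hu1, hu2⟩ := hu
    have hu0 : 0 < u := lt_of_le_of_lt hs0 hu1
    have hu1' : u ≤ 1 := le_of_lt (lt_of_lt_of_le hu2 ht1)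
    have : c (u / 3) < c u :=
      hmono ⟨by linarith, by linarith⟩ ⟨by linarith, hu1'⟩ (by linarith)
    linarith
  simp only []
  linarith [hadd]

theorem region_comparison (c : ℝ → ℝ)
    (hc : ContinuousOn c (Icc 0 1)) (hmono : StrictMonoOn c (Icc 0 1))
    (xj : ℝ) (hxj : xj ∈ Icc (0:ℝ) 1) :
    (U c ((2 + xj) / 3) xj ≤ U c (xj / 3) xj ↔ 1/2 ≤ xj) ∧
    (U c (xj / 3) xj = U c ((2 + xj) / 3) xj ↔ xj = 1/2) := by
  obtain ⟨h0, h1⟩ := hxj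
  have hx' : (1 - xj) ∈ Icc (0:ℝ) 1 := ⟨by linarith, by linarith⟩
  have e1 : U c (xj / 3) xj = ∫ u in (0:ℝ)..xj, (c u - c (u / 3)) :=
    keyU c hc hmono ⟨h0, h1⟩
  have e2 : U c ((2 + xj) / 3) xj = ∫ u in (0:ℝ)..(1 - xj), (c u - c (u / 3)) := by
    rw [symmU c xj, show (1 - xj) / 3 = (1 - xj) / 3 from rfl]
    exact keyU c hc hmono hx'
  have hF := Fmono c hc hmono
  constructor
  · rw [e1, e2, hF.le_iff_le hx' ⟨h0, h1⟩]
    constructor <;> intro h <;> linarith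
  · rw [e1, e2]
    constructor
    · intro h
      have := hF.injOn ⟨h0, h1⟩ hx' h
      linarith
    · intro h
      rw [h]; norm_num
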